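/- Any optimal solution x* to the stochastic assignment problem (minimizing the two-queue expected waiting time f(x, α) over x ∈ [0,1]ⁿ with stability constraints, for fixed α ∈ (0,1)) has at most one fractional component: the set {i : 0 < x*ᵢ < 1} is empty or a singleton, provided the service rates μ₁, …, μₙ are pairwise distinct. -/

import Mathlib

private theorem aux_quad (A C A1 C1 a c Dx Dy L t : ℝ)
    (hDx : Dx ≠ 0) (hDy : Dy ≠ 0) (hL : L ≠ 0) :
    ((A + t * a) * (C + t * c) / Dx + (A1 + -t * a) * (C1 + -t * c) / Dy) / L +
      ((A + -t * a) * (C + -t * c) / Dx + (A1 + - -t * a) * (C1 + - -t * c) / Dy) / L -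
      2 * (((A + 0 * a) * (C + 0 * c) / Dx + (A1 + -0 * a) * (C1 + -0 * c) / Dy) / L)
      = 2 * t ^ 2 * (a * c) * (1 / Dx + 1 / Dy) / L := by
  field_simp
  ring

set_option maxHeartbeats 2000000 in
/-- Any optimal solution of the stochastic assignment problem has at most one
fractional component, provided the service rates are pairwise distinct. -/
theorem stmt_12 (n : ℕ) (lam mu : Fin n → ℝ) (hlam : ∀ k, 0 < lam k)
    (hmu : ∀ k, 0 < mu k) (hdist : Function.Injective mu)
    (α : ℝ) (hα : α ∈ Set.Ioo (0 : ℝ) 1)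
    (f : (Fin n → ℝ) → ℝ)
    (hf : ∀ y : Fin n → ℝ, f y =
      ((∑ k, lam k * y k / (mu k) ^ 2) * (∑ k, lam k * y k) /
          (α ^ 2 - α * ∑ k, lam k * y k / mu k) +
        (∑ k, lam k * (1 - y k) / (mu k) ^ 2) * (∑ k, lam k * (1 - y k)) /
          ((1 - α) ^ 2 - (1 - α) * ∑ k, lam k * (1 - y k) / mu k)) /
        (∑ k, lam k))
    (S : Set (Fin n → ℝ))
    (hS : S = {y : Fin n → ℝ | (∀ k, y k ∈ Set.Icc (0 : ℝ) 1) ∧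
      ∑ k, lam k * y k / mu k < α ∧
      ∑ k, lam k * (1 - y k) / mu k < 1 - α})
    (xs : Fin n → ℝ) (hxs : xs ∈ S) (hopt : ∀ y ∈ S, f xs ≤ f y) :
    {i : Fin n | 0 < xs i ∧ xs i < 1}.Subsingleton := by
  intro i hi j hj
  by_contra hij
  simp only [Set.mem_setOf_eq] at hi hj
  obtain ⟨hα0, hα1⟩ := hα
  have h1α : 0 < 1 - α := by linarith
  have hmuij : mu i ≠ mu j := fun h => hij (hdist h)
  have hli := hlam i; have hlj := hlam j
  have hmi := hmu i; have hmj := hmu j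
  rw [hS] at hxs
  obtain ⟨hbox, hBx, hBy⟩ := hxs
  -- perturbation direction, keeping ∑ lam k * y k / mu k invariant
  set d : Fin n → ℝ :=
    fun k => (if k = i then mu i / lam i else 0) - (if k = j then mu j / lam j else 0) with hd
  have hdi : d i = mu i / lam i := by rw [hd]; simp [hij]
  have hdj : d j = -(mu j / lam j) := by
    rw [hd]; simp [Ne.symm hij]
  have hdk : ∀ k, k ≠ i → k ≠ j → d k = 0 := by
    intro k h1 h2; rw [hd]; simp [h1, h2]
  -- generic weighted sum along the direction
  have keysum : ∀ g : Fin n → ℝ, ∑ k, g k * d k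
      = g i * (mu i / lam i) - g j * (mu j / lam j) := by
    intro g
    simp only [hd, mul_sub, mul_ite, mul_zero]
    rw [Finset.sum_sub_distrib, Finset.sum_ite_eq', Finset.sum_ite_eq']
    simp
  -- the three sum transformation lemmas
  have sum1 : ∀ (z : Fin n → ℝ) (t : ℝ), ∑ k, lam k * (z k + t * d k) / mu k ^ 2
      = (∑ k, lam k * z k / mu k ^ 2) + t * (1 / mu i - 1 / mu j) := by
    intro z t
    have e : ∀ k, lam k * (z k + t * d k) / mu k ^ 2
        = lam k * z k / mu k ^ 2 + t * (lam k / mu k ^ 2 * d k) := fun k => by ring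
    simp_rw [e]
    rw [Finset.sum_add_distrib, ← Finset.mul_sum, keysum (fun k => lam k / mu k ^ 2)]
    congr 1
    field_simp
  have sum2 : ∀ (z : Fin n → ℝ) (t : ℝ), ∑ k, lam k * (z k + t * d k) / mu k
      = ∑ k, lam k * z k / mu k := by
    intro z t
    have e : ∀ k, lam k * (z k + t * d k) / mu k
        = lam k * z k / mu k + t * (lam k / mu k * d k) := fun k => by ring
    simp_rw [e]
    rw [Finset.sum_add_distrib, ← Finset.mul_sum, keysum (fun k => lam k / mu k)]
    have h0 : lam i / mu i * (mu i / lam i) - lam j / mu j * (mu j / lam j) = 0 := by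
      field_simp
      ring
    rw [h0, mul_zero, add_zero]
  have sum3 : ∀ (z : Fin n → ℝ) (t : ℝ), ∑ k, lam k * (z k + t * d k)
      = (∑ k, lam k * z k) + t * (mu i - mu j) := by
    intro z t
    have e : ∀ k, lam k * (z k + t * d k)
        = lam k * z k + t * (lam k * d k) := fun k => by ring
    simp_rw [e]
    rw [Finset.sum_add_distrib, ← Finset.mul_sum, keysum lam]
    congr 1
    field_simp
  -- value of f along the perturbation line
  have hval : ∀ t : ℝ, f (fun k => xs k + t * d k) =
      (((∑ k, lam k * xs k / mu k ^ 2) + t * (1 / mu i - 1 / mu j)) *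
          ((∑ k, lam k * xs k) + t * (mu i - mu j)) /
          (α ^ 2 - α * ∑ k, lam k * xs k / mu k) +
        ((∑ k, lam k * (1 - xs k) / mu k ^ 2) + -t * (1 / mu i - 1 / mu j)) *
          ((∑ k, lam k * (1 - xs k)) + -t * (mu i - mu j)) /
          ((1 - α) ^ 2 - (1 - α) * ∑ k, lam k * (1 - xs k) / mu k)) /
        (∑ k, lam k) := by
    intro t
    rw [hf]
    have e1 : ∀ k, (1 : ℝ) - (xs k + t * d k) = (1 - xs k) + -t * d k := fun k => by ring
    simp only [e1]
    simp only [sum1, sum2, sum3]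
  -- step size
  set ε : ℝ := min (min (xs i * (lam i / mu i)) ((1 - xs i) * (lam i / mu i)))
      (min (xs j * (lam j / mu j)) ((1 - xs j) * (lam j / mu j))) with he
  have hri : 0 < mu i / lam i := div_pos hmi hli
  have hrj : 0 < mu j / lam j := div_pos hmj hlj
  have he0 : 0 < ε := by
    refine lt_min (lt_min ?_ ?_) (lt_min ?_ ?_)
    · exact mul_pos hi.1 (div_pos hli hmi)
    · exact mul_pos (by linarith [hi.2]) (div_pos hli hmi)
    · exact mul_pos hj.1 (div_pos hlj hmj)
    · exact mul_pos (by linarith [hj.2]) (div_pos hlj hmj)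
  have he1 : ε * (mu i / lam i) ≤ xs i := by
    have h := mul_le_mul_of_nonneg_right
      ((min_le_left _ _).trans (min_le_left _ _) : ε ≤ xs i * (lam i / mu i)) hri.le
    have h2 : xs i * (lam i / mu i) * (mu i / lam i) = xs i := by
      field_simp
    linarith
  have he2 : ε * (mu i / lam i) ≤ 1 - xs i := by
    have h := mul_le_mul_of_nonneg_right
      ((min_le_left _ _).trans (min_le_right _ _) : ε ≤ (1 - xs i) * (lam i / mu i)) hri.le
    have h2 : (1 - xs i) * (lam i / mu i) * (mu i / lam i) = 1 - xs i := by
      field_simp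
    linarith
  have he3 : ε * (mu j / lam j) ≤ xs j := by
    have h := mul_le_mul_of_nonneg_right
      ((min_le_right _ _).trans (min_le_left _ _) : ε ≤ xs j * (lam j / mu j)) hrj.le
    have h2 : xs j * (lam j / mu j) * (mu j / lam j) = xs j := by
      field_simp
    linarith
  have he4 : ε * (mu j / lam j) ≤ 1 - xs j := by
    have h := mul_le_mul_of_nonneg_right
      ((min_le_right _ _).trans (min_le_right _ _) : ε ≤ (1 - xs j) * (lam j / mu j)) hrj.le
    have h2 : (1 - xs j) * (lam j / mu j) * (mu j / lam j) = 1 - xs j := by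
      field_simp
    linarith
  -- feasibility of the perturbed points
  have hfeas : ∀ t : ℝ, -ε ≤ t → t ≤ ε → (fun k => xs k + t * d k) ∈ S := by
    intro t ht1 ht2
    rw [hS]
    refine ⟨?_, ?_, ?_⟩
    · intro k
      simp only [Set.mem_Icc]
      by_cases hk : k = i
      · subst hk
        rw [hdi]
        have hl := mul_le_mul_of_nonneg_right ht1 hri.le
        have hr := mul_le_mul_of_nonneg_right ht2 hri.le
        constructor <;> [linarith [he1, hl]; linarith [he2, hr]]
      · by_cases hk' : k = j
        · subst hk'
          rw [hdj]
          have hl := mul_le_mul_of_nonneg_right ht1 hrj.le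
          have hr := mul_le_mul_of_nonneg_right ht2 hrj.le
          constructor <;> [linarith [he3, hr]; linarith [he4, hl]]
        · rw [hdk k hk hk', mul_zero, add_zero]
          exact Set.mem_Icc.mp (hbox k)
    · simpa only [sum2] using hBx
    · have e1 : ∀ k, (1 : ℝ) - (xs k + t * d k) = (1 - xs k) + -t * d k := fun k => by ring
      simp only [e1, sum2]
      exact hBy
  -- positivity of denominators
  have hBx0 : 0 ≤ ∑ k, lam k * xs k / mu k :=
    Finset.sum_nonneg fun k _ => div_nonneg (mul_nonneg (hlam k).le (hbox k).1) (hmu k).le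
  have hDx : 0 < α ^ 2 - α * ∑ k, lam k * xs k / mu k := by nlinarith
  have hBy0 : 0 ≤ ∑ k, lam k * (1 - xs k) / mu k :=
    Finset.sum_nonneg fun k _ =>
      div_nonneg (mul_nonneg (hlam k).le (by linarith [(hbox k).2])) (hmu k).le
  have hDy : 0 < (1 - α) ^ 2 - (1 - α) * ∑ k, lam k * (1 - xs k) / mu k := by nlinarith
  have hL : 0 < ∑ k, lam k := Finset.sum_pos (fun k _ => hlam k) ⟨i, Finset.mem_univ i⟩
  -- optimality at the two perturbed points
  have hu := hopt _ (hfeas ε (by linarith) le_rfl)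
  have hv := hopt _ (hfeas (-ε) le_rfl (by linarith))
  have hfu := hval ε
  have hfv := hval (-ε)
  have e0 : (fun k => xs k + (0 : ℝ) * d k) = xs := by funext k; ring
  have hfx := hval 0
  rw [e0] at hfx
  -- the quadratic identity
  have hkey : f (fun k => xs k + ε * d k) + f (fun k => xs k + (-ε) * d k) - 2 * f xs
      = 2 * ε ^ 2 * ((1 / mu i - 1 / mu j) * (mu i - mu j)) *
          (1 / (α ^ 2 - α * ∑ k, lam k * xs k / mu k) +
            1 / ((1 - α) ^ 2 - (1 - α) * ∑ k, lam k * (1 - xs k) / mu k)) /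
          (∑ k, lam k) := by
    rw [hfu, hfv, hfx]
    have := aux_quad (∑ k, lam k * xs k / mu k ^ 2) (∑ k, lam k * xs k)
      (∑ k, lam k * (1 - xs k) / mu k ^ 2) (∑ k, lam k * (1 - xs k))
      (1 / mu i - 1 / mu j) (mu i - mu j)
      (α ^ 2 - α * ∑ k, lam k * xs k / mu k)
      ((1 - α) ^ 2 - (1 - α) * ∑ k, lam k * (1 - xs k) / mu k)
      (∑ k, lam k) ε hDx.ne' hDy.ne' hL.ne'
    linarith [this]
  -- strict concavity coefficient is negative
  have hac : (1 / mu i - 1 / mu j) * (mu i - mu j) < 0 := by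
    have h := sub_ne_zero.mpr hmuij
    have h2 : (0 : ℝ) < (mu i - mu j) ^ 2 := (sq_nonneg _).lt_of_ne' (pow_ne_zero 2 h)
    have h3 : (1 / mu i - 1 / mu j) * (mu i - mu j)
        = -((mu i - mu j) ^ 2 / (mu i * mu j)) := by
      field_simp
      ring
    rw [h3]
    have : 0 < (mu i - mu j) ^ 2 / (mu i * mu j) := div_pos h2 (mul_pos hmi hmj)
    linarith
  have hneg : 2 * ε ^ 2 * ((1 / mu i - 1 / mu j) * (mu i - mu j)) *
      (1 / (α ^ 2 - α * ∑ k, lam k * xs k / mu k) +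
        1 / ((1 - α) ^ 2 - (1 - α) * ∑ k, lam k * (1 - xs k) / mu k)) /
      (∑ k, lam k) < 0 := by
    apply div_neg_of_neg_of_pos _ hL
    apply mul_neg_of_neg_of_pos
    · exact mul_neg_of_pos_of_neg (by positivity) hac
    · exact add_pos (one_div_pos.mpr hDx) (one_div_pos.mpr hDy)
  linarith
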